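/- Let S ~ Gamma(n, σ) with integer shape n ≥ 1 and scale σ > 0, and fix p ≠ 0 with p > -(n+1) (so that all expectations below are finite). Then the function c ↦ E[exp(p(cS/σ - 1)) - p(cS/σ - 1) - 1] over c with pc/σ·σ < 1 (i.e., pc < 1) is uniquely minimized at c₀ = p⁻¹(1 - e^{-p/(n+1)}). -/

import Mathlib

open MeasureTheory ProbabilityTheory

open Real Set

section Aux
lemma pdf_eq_pos {a r x : ℝ} (hx : 0 < x) :
    gammaPDFReal a r x = r ^ a / Real.Gamma a * x ^ (a - 1) * Real.exp (-(r * x)) := by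
  rw [gammaPDFReal, if_pos hx.le]

lemma integrableOn_rpow_exp {s b : ℝ} (hs : -1 < s) (hb : 0 < b) :
    IntegrableOn (fun x : ℝ => x ^ s * Real.exp (-(b * x))) (Ioi 0) := by
  have h := integrableOn_rpow_mul_exp_neg_mul_rpow hs zero_lt_one hb
  refine h.congr_fun (fun x hx => ?_) measurableSet_Ioi
  simp only [Real.rpow_one]; ring_nf

lemma pdf_mul_exp_integrable {a r t : ℝ} (ha : 0 < a) (hr : 0 < r) (ht : t < r) :
    IntegrableOn (fun x => gammaPDFReal a r x * Real.exp (t * x)) (Ioi 0) := by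
  have h := (integrableOn_rpow_exp (by linarith : (-1:ℝ) < a - 1)
    (by linarith : 0 < r - t)).const_mul (r ^ a / Real.Gamma a)
  refine IntegrableOn.congr_fun h (fun x hx => ?_) measurableSet_Ioi
  have hx0 : (0:ℝ) < x := hx
  simp only [pdf_eq_pos hx0, mul_assoc, ← Real.exp_add]
  ring_nf

lemma pdf_integrable {a r : ℝ} (ha : 0 < a) (hr : 0 < r) :
    IntegrableOn (fun x => gammaPDFReal a r x) (Ioi 0) := by
  refine IntegrableOn.congr_fun (pdf_mul_exp_integrable ha hr (by linarith : (0:ℝ) < r))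
    (fun x hx => ?_) measurableSet_Ioi
  simp

lemma pdf_mul_id_integrable {a r : ℝ} (ha : 0 < a) (hr : 0 < r) :
    IntegrableOn (fun x => gammaPDFReal a r x * x) (Ioi 0) := by
  have h := (integrableOn_rpow_exp (by linarith : (-1:ℝ) < a) hr).const_mul
    (r ^ a / Real.Gamma a)
  refine IntegrableOn.congr_fun h (fun x hx => ?_) measurableSet_Ioi
  have hx0 : (0:ℝ) < x := hx
  have hxa : x ^ a = x ^ (a - 1) * x := by
    rw [← Real.rpow_add_one hx0.ne' (a - 1)]; ring_nf
  simp only [pdf_eq_pos hx0, hxa]; ring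

lemma gamma_int_exp {a r t : ℝ} (ha : 0 < a) (hr : 0 < r) (ht : t < r) :
    ∫ x in Ioi 0, gammaPDFReal a r x * Real.exp (t * x) = (r / (r - t)) ^ a := by
  have hrt : 0 < r - t := by linarith
  have hΓ : Real.Gamma a ≠ 0 := (Real.Gamma_pos_of_pos ha).ne'
  rw [setIntegral_congr_fun measurableSet_Ioi
    (g := fun x => r ^ a / Real.Gamma a * (x ^ (a - 1) * Real.exp (-((r - t) * x))))
    (fun x hx => ?_)]
  · rw [integral_const_mul, integral_rpow_mul_exp_neg_mul_Ioi ha hrt]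
    have h4 : (r / (r - t)) ^ a = r ^ a * (1 / (r - t)) ^ a := by
      rw [← Real.mul_rpow hr.le (by positivity), mul_one_div]
    rw [h4]; field_simp
  · have hx0 : (0:ℝ) < x := hx
    simp only [pdf_eq_pos hx0, mul_assoc, ← Real.exp_add]
    ring_nf

lemma gamma_int_id {a r : ℝ} (ha : 0 < a) (hr : 0 < r) :
    ∫ x in Ioi 0, gammaPDFReal a r x * x = a / r := by
  have hΓ : Real.Gamma a ≠ 0 := (Real.Gamma_pos_of_pos ha).ne'
  rw [setIntegral_congr_fun measurableSet_Ioi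
    (g := fun x => r ^ a / Real.Gamma a * (x ^ (a + 1 - 1) * Real.exp (-(r * x))))
    (fun x hx => ?_)]
  · rw [integral_const_mul, integral_rpow_mul_exp_neg_mul_Ioi (by linarith) hr]
    rw [Real.Gamma_add_one ha.ne']
    have h2 : (1 / r) ^ (a + 1) = (1 / r) ^ a * (1 / r) :=
      Real.rpow_add_one (by positivity) a
    have h3 : r ^ a * (1 / r) ^ a = 1 := by
      rw [← Real.mul_rpow hr.le (by positivity), mul_one_div, div_self hr.ne', Real.one_rpow]
    calc r ^ a / Real.Gamma a * ((1 / r) ^ (a + 1) * (a * Real.Gamma a))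
        = (r ^ a * (1 / r) ^ a) * ((1 / r) * a) * (Real.Gamma a / Real.Gamma a) := by
          rw [h2]; ring
      _ = a / r := by rw [h3, div_self hΓ]; ring
  · have hx0 : (0:ℝ) < x := hx
    have hxa : x ^ (a + 1 - 1) = x ^ (a - 1) * x := by
      rw [← Real.rpow_add_one hx0.ne' (a - 1)]; ring_nf
    simp only [pdf_eq_pos hx0, hxa]; ring

lemma integral_gammaMeasure_eq {a r : ℝ} (ha : 0 < a) (hr : 0 < r) (g : ℝ → ℝ) :
    ∫ x, g x ∂(gammaMeasure a r) = ∫ x in Ioi 0, gammaPDFReal a r x * g x := by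
  have hmeas : Measurable fun x => (gammaPDFReal a r x).toNNReal :=
    (measurable_gammaPDFReal a r).real_toNNReal
  have h1 : ∫ x, g x ∂(gammaMeasure a r)
      = ∫ x, ((gammaPDFReal a r x).toNNReal : ℝ) • g x := by
    rw [gammaMeasure]
    exact integral_withDensity_eq_integral_smul hmeas g
  rw [h1]
  have h2 : ∀ x, ((gammaPDFReal a r x).toNNReal : ℝ) • g x = gammaPDFReal a r x * g x := by
    intro x
    simp only [NNReal.smul_def, smul_eq_mul, Real.coe_toNNReal _ (gammaPDFReal_nonneg ha hr x)]
  simp_rw [h2]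
  rw [← integral_Ici_eq_integral_Ioi,
    setIntegral_eq_integral_of_forall_compl_eq_zero fun x hx => ?_]
  have hx' : x < 0 := by simpa using hx
  simp [gammaPDFReal, not_le.mpr hx']

lemma gamma_mass {a r : ℝ} (ha : 0 < a) (hr : 0 < r) :
    ∫ x in Ioi 0, gammaPDFReal a r x = 1 := by
  have hprob := isProbabilityMeasure_gammaMeasure ha hr
  have h := integral_gammaMeasure_eq ha hr (fun _ => 1)
  simpa using h.symm

lemma key_ineq (u u₀ : ℝ) (hu : 0 < u) (hu₀ : 0 < u₀) (hne : u ≠ u₀) :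
    ∀ n : ℕ, 1 ≤ n → ((n : ℝ) + 1) * u₀ * u ^ n < u₀ ^ (n + 1) + (n : ℝ) * u * u ^ n := by
  intro n hn
  induction n, hn using Nat.le_induction with
  | base =>
      push_cast; ring_nf
      rcases hne.lt_or_gt with h | h <;>
        nlinarith [mul_pos (sub_pos.mpr h) (sub_pos.mpr h)]
  | succ m hm ih =>
      have ih' := mul_lt_mul_of_pos_right ih hu
      have hsign : 0 ≤ (u₀ - u) * (u₀ ^ (m + 1) - u ^ (m + 1)) := by
        rcases le_or_gt u u₀ with h | h
        · exact mul_nonneg (by linarith) (by nlinarith [pow_le_pow_left₀ hu.le h (m + 1)])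
        · exact mul_nonneg_of_nonpos_of_nonpos (by linarith)
            (by nlinarith [pow_le_pow_left₀ hu₀.le h.le (m + 1)])
      push_cast
      simp only [pow_succ] at ih' hsign ⊢
      nlinarith [ih', hsign, pow_pos hu m, pow_pos hu₀ m]
end Aux


/-- The linex risk `c ↦ E[exp (p (c S / σ - 1)) - p (c S / σ - 1) - 1]` of the scale
equivariant estimator `c S`, where `S ~ Gamma(n, σ)` with integer shape `n ≥ 1`, is
uniquely minimized over `{c | p c < 1}` at `c₀ = p⁻¹ (1 - exp (-p/(n+1)))`. -/
theorem gamma_linex_risk_uniquely_minimized (n : ℕ) (hn : 1 ≤ n) (σ p : ℝ)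
    (hσ : 0 < σ) (hp : p ≠ 0) (hp' : -((n : ℝ) + 1) < p) :
    let R : ℝ → ℝ := fun c =>
      ∫ x, (Real.exp (p * (c * x / σ - 1)) - p * (c * x / σ - 1) - 1)
        ∂(gammaMeasure n (1 / σ))
    let c₀ : ℝ := p⁻¹ * (1 - Real.exp (-p / (n + 1)))
    p * c₀ < 1 ∧ ∀ c : ℝ, p * c < 1 → c ≠ c₀ → R c₀ < R c := by

  intro R c₀
  have ha : 0 < ((n : ℕ) : ℝ) := by exact_mod_cast hn.trans_lt' (by norm_num)
  have hr : 0 < 1 / σ := by positivity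
  set u₀ : ℝ := Real.exp (-p / ((n : ℝ) + 1)) with hu₀def
  have hu₀pos : 0 < u₀ := Real.exp_pos _
  have hpc₀ : p * c₀ = 1 - u₀ := by
    show p * (p⁻¹ * (1 - u₀)) = 1 - u₀
    rw [← mul_assoc, mul_inv_cancel₀ hp, one_mul]
  have hexp : u₀ ^ (n + 1) = Real.exp (-p) := by
    rw [hu₀def, ← Real.exp_nat_mul]
    congr 1
    have : ((n : ℝ) + 1) ≠ 0 := by positivity
    field_simp
    push_cast; ring
  -- risk formula
  have hR : ∀ c : ℝ, p * c < 1 →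
      R c = Real.exp (-p) * ((1 - p * c) ^ n)⁻¹ + n * (1 - p * c) + (p - 1 - n) := by
    intro c hc
    have hu : 0 < 1 - p * c := by linarith
    have htlt : p * c / σ < 1 / σ := by
      gcongr
    show (∫ x, (Real.exp (p * (c * x / σ - 1)) - p * (c * x / σ - 1) - 1)
        ∂(gammaMeasure n (1 / σ))) = _
    rw [integral_gammaMeasure_eq ha hr]
    have hpt : ∀ x : ℝ,
        gammaPDFReal n (1/σ) x * (Real.exp (p * (c * x / σ - 1)) - p * (c * x / σ - 1) - 1)
        = Real.exp (-p) * (gammaPDFReal n (1/σ) x * Real.exp ((p * c / σ) * x))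
          - (p * c / σ) * (gammaPDFReal n (1/σ) x * x)
          + (p - 1) * gammaPDFReal n (1/σ) x := by
      intro x
      have hh : Real.exp (p * (c * x / σ - 1)) = Real.exp ((p * c / σ) * x) * Real.exp (-p) := by
        rw [← Real.exp_add]; congr 1; field_simp; ring
      rw [hh]; ring
    simp_rw [hpt]
    have iA : IntegrableOn (fun x => Real.exp (-p) *
        (gammaPDFReal n (1/σ) x * Real.exp ((p * c / σ) * x))) (Ioi 0) :=
      (pdf_mul_exp_integrable ha hr htlt).const_mul _
    have iB : IntegrableOn (fun x => (p * c / σ) * (gammaPDFReal n (1/σ) x * x)) (Ioi 0) :=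
      (pdf_mul_id_integrable ha hr).const_mul _
    have iC : IntegrableOn (fun x => (p - 1) * gammaPDFReal n (1/σ) x) (Ioi 0) :=
      (pdf_integrable ha hr).const_mul _
    have iAB : IntegrableOn (fun x => Real.exp (-p) *
        (gammaPDFReal n (1/σ) x * Real.exp ((p * c / σ) * x))
        - (p * c / σ) * (gammaPDFReal n (1/σ) x * x)) (Ioi 0) := iA.sub iB
    rw [integral_add iAB iC, integral_sub iA iB, integral_const_mul, integral_const_mul,
      integral_const_mul, gamma_int_exp ha hr htlt, gamma_int_id ha hr, gamma_mass ha hr]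
    have hd : (1:ℝ) / σ - p * c / σ = (1 - p * c) / σ := by ring
    have hfrac : (1 / σ) / ((1 - p * c) / σ) = (1 - p * c)⁻¹ := by
      field_simp
    rw [hd, hfrac, Real.rpow_natCast, inv_pow]
    have hmean : p * c / σ * ((n : ℝ) / (1 / σ)) = p * c * n := by
      field_simp
    rw [hmean]
    ring
  have hc₀lt : p * c₀ < 1 := by rw [hpc₀]; linarith
  refine ⟨hc₀lt, fun c hc hne => ?_⟩
  have hu : 0 < 1 - p * c := by linarith
  have h10 : 1 - p * c₀ = u₀ := by rw [hpc₀]; ring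
  rw [hR c hc, hR c₀ hc₀lt, h10]
  have hneu : 1 - p * c ≠ u₀ := by
    intro h
    apply hne
    have hpp : p * c = p * c₀ := by rw [hpc₀]; linarith
    exact mul_left_cancel₀ hp hpp
  set u := 1 - p * c with hudef
  rw [← hexp]
  have hL : u₀ ^ (n + 1) * (u₀ ^ n)⁻¹ = u₀ := by
    rw [pow_succ]; field_simp
  have key := key_ineq u u₀ hu hu₀pos hneu n hn
  have hgoal : ((n:ℝ) + 1) * u₀ < u₀ ^ (n + 1) * (u ^ n)⁻¹ + (n:ℝ) * u := by
    rw [← mul_lt_mul_iff_left₀ (pow_pos hu n)]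
    have hexp2 : (u₀ ^ (n + 1) * (u ^ n)⁻¹ + (n:ℝ) * u) * u ^ n
        = u₀ ^ (n + 1) + (n:ℝ) * u * u ^ n := by
      field_simp
      try ring
    rw [hexp2]
    nlinarith [key]
  rw [hL]
  linarith [hgoal]
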